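/- Let $0<p<\infty$ and let $(A_l)_{l\geq 0}$ be a sequence in $\mathcal{L}_{p,\infty}$ with $\lim_{t\to\infty} t^{1/p}\mu(t,A_l) = c_l$ for each $l$, and let $A$ be an operator such that $\mathrm{dist}_{\mathcal{L}_{p,\infty}}(A_l - A, (\mathcal{L}_{p,\infty})_0) \to 0$ as $l \to \infty$. Then the limits $\lim_{t\to\infty} t^{1/p}\mu(t,A)$ and $\lim_{l\to\infty} c_l$ both exist and are equal. -/

import Mathlib

open Filter Topology ENNReal

variable {H : Type*} [NormedAddCommGroup H] [InnerProductSpace ℂ H] [CompleteSpace H]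

/-- The singular value function `μ(t,T)`: the distance from `T` to operators of rank `≤ t`. -/
noncomputable def sv (T : H →L[ℂ] H) (t : ℝ) : ℝ :=
  sInf {c : ℝ | ∃ R : H →L[ℂ] H, FiniteDimensional ℂ (LinearMap.range (R : H →ₗ[ℂ] H)) ∧
    (Module.finrank ℂ (LinearMap.range (R : H →ₗ[ℂ] H)) : ℝ) ≤ t ∧ c = ‖T - R‖}

/-- The weak Schatten quasinorm `‖T‖_{p,∞} = sup_{t ≥ 0} t^{1/p} μ(t,T)` (valued in `ℝ≥0∞`). -/
noncomputable def wnorm (p : ℝ) (T : H →L[ℂ] H) : ℝ≥0∞ :=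
  ⨆ t : {t : ℝ // 0 ≤ t}, ENNReal.ofReal ((t : ℝ) ^ (1 / p) * sv T t)

/-- The separable ideal `(𝓛_{p,∞})₀`: operators with `t^{1/p} μ(t,T) → 0` as `t → ∞`. -/
def zeroIdeal (p : ℝ) : Set (H →L[ℂ] H) :=
  {T | Tendsto (fun t : ℝ => t ^ (1 / p) * sv T t) atTop (𝓝 0)}
/-- The distance of an operator `A` to the separable ideal `(𝓛_{p,∞})₀`,
measured in the weak Schatten quasinorm. -/
noncomputable def wdist (p : ℝ) (A : H →L[ℂ] H) : ℝ≥0∞ :=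
  ⨅ B ∈ zeroIdeal (H := H) p, wnorm p (A - B)

set_option linter.unusedSectionVars false
set_option linter.unusedVariables false

def svSet (T : H →L[ℂ] H) (t : ℝ) : Set ℝ :=
  {c : ℝ | ∃ R : H →L[ℂ] H, FiniteDimensional ℂ (LinearMap.range (R : H →ₗ[ℂ] H)) ∧
    (Module.finrank ℂ (LinearMap.range (R : H →ₗ[ℂ] H)) : ℝ) ≤ t ∧ c = ‖T - R‖}

lemma sv_eq (T : H →L[ℂ] H) (t : ℝ) : sv T t = sInf (svSet T t) := rfl

lemma lm_range_neg (f : H →ₗ[ℂ] H) : LinearMap.range (-f) = LinearMap.range f := by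
  ext x
  simp only [LinearMap.mem_range, LinearMap.neg_apply]
  constructor
  · rintro ⟨y, rfl⟩; exact ⟨-y, by simp⟩
  · rintro ⟨y, rfl⟩; exact ⟨-y, by simp⟩

lemma norm_mem_svSet (T : H →L[ℂ] H) {t : ℝ} (ht : 0 ≤ t) : ‖T‖ ∈ svSet T t := by
  refine ⟨0, ?_, ?_, by simp⟩
  · rw [ContinuousLinearMap.coe_zero, LinearMap.range_zero]; infer_instance
  · rw [ContinuousLinearMap.coe_zero, LinearMap.range_zero]; simpa using ht

lemma svSet_nonempty (T : H →L[ℂ] H) {t : ℝ} (ht : 0 ≤ t) : (svSet T t).Nonempty :=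
  ⟨‖T‖, norm_mem_svSet T ht⟩

lemma svSet_bddBelow (T : H →L[ℂ] H) (t : ℝ) : BddBelow (svSet T t) := by
  refine ⟨0, fun c hc => ?_⟩
  obtain ⟨R, -, -, rfl⟩ := hc
  positivity

lemma sv_nonneg (T : H →L[ℂ] H) (t : ℝ) : 0 ≤ sv T t := by
  apply Real.sInf_nonneg
  rintro c ⟨R, -, -, rfl⟩
  positivity

lemma sv_le_norm (T : H →L[ℂ] H) {t : ℝ} (ht : 0 ≤ t) : sv T t ≤ ‖T‖ :=
  csInf_le (svSet_bddBelow T t) (norm_mem_svSet T ht)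

lemma sv_anti (T : H →L[ℂ] H) {t s : ℝ} (ht : 0 ≤ t) (hts : t ≤ s) : sv T s ≤ sv T t := by
  apply csInf_le_csInf (svSet_bddBelow T s) (svSet_nonempty T ht)
  rintro c ⟨R, h1, h2, rfl⟩
  exact ⟨R, h1, h2.trans hts, rfl⟩

lemma sv_neg (T : H →L[ℂ] H) (t : ℝ) : sv (-T) t = sv T t := by
  have hset : svSet (-T) t = svSet T t := by
    ext c
    constructor
    · rintro ⟨R, h1, h2, rfl⟩
      refine ⟨-R, ?_, ?_, ?_⟩
      · rw [ContinuousLinearMap.coe_neg, lm_range_neg]; exact h1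
      · rw [ContinuousLinearMap.coe_neg, lm_range_neg]; exact h2
      · rw [show T - -R = -(-T - R) by abel, norm_neg]
    · rintro ⟨R, h1, h2, rfl⟩
      refine ⟨-R, ?_, ?_, ?_⟩
      · rw [ContinuousLinearMap.coe_neg, lm_range_neg]; exact h1
      · rw [ContinuousLinearMap.coe_neg, lm_range_neg]; exact h2
      · rw [show -T - -R = -(T - R) by abel, norm_neg]
  rw [sv_eq, sv_eq, hset]

lemma sv_add_le (X Y : H →L[ℂ] H) {t s : ℝ} (ht : 0 ≤ t) (hs : 0 ≤ s) :
    sv (X + Y) (t + s) ≤ sv X t + sv Y s := by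
  rw [sv_eq, sv_eq, sv_eq]
  apply _root_.le_of_forall_pos_le_add
  intro ε hε
  obtain ⟨a, ⟨R, hR1, hR2, rfl⟩, haR⟩ :=
    Real.lt_sInf_add_pos (svSet_nonempty X ht) (half_pos hε)
  obtain ⟨b, ⟨S, hS1, hS2, rfl⟩, hbS⟩ :=
    Real.lt_sInf_add_pos (svSet_nonempty Y hs) (half_pos hε)
  haveI := hR1; haveI := hS1
  have hle : LinearMap.range ((R + S : H →L[ℂ] H) : H →ₗ[ℂ] H) ≤
      LinearMap.range (R : H →ₗ[ℂ] H) ⊔ LinearMap.range (S : H →ₗ[ℂ] H) := by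
    rintro x ⟨y, rfl⟩
    exact Submodule.add_mem_sup ⟨y, rfl⟩ ⟨y, rfl⟩
  have hmem : ‖X + Y - (R + S)‖ ∈ svSet (X + Y) (t + s) := by
    refine ⟨R + S, Submodule.finiteDimensional_of_le hle, ?_, rfl⟩
    have h1 : Module.finrank ℂ (LinearMap.range ((R + S : H →L[ℂ] H) : H →ₗ[ℂ] H)) ≤
        Module.finrank ℂ ((LinearMap.range (R : H →ₗ[ℂ] H)) ⊔ LinearMap.range (S : H →ₗ[ℂ] H) :
          Submodule ℂ H) := Submodule.finrank_mono hle
    have h2 := Submodule.finrank_add_le_finrank_add_finrank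
      (LinearMap.range (R : H →ₗ[ℂ] H)) (LinearMap.range (S : H →ₗ[ℂ] H))
    have h3 : (Module.finrank ℂ (LinearMap.range ((R + S : H →L[ℂ] H) : H →ₗ[ℂ] H)) : ℝ) ≤
        (Module.finrank ℂ (LinearMap.range (R : H →ₗ[ℂ] H)) : ℝ) +
        (Module.finrank ℂ (LinearMap.range (S : H →ₗ[ℂ] H)) : ℝ) := by
      exact_mod_cast h1.trans h2
    linarith
  have hnorm : ‖X + Y - (R + S)‖ ≤ ‖X - R‖ + ‖Y - S‖ := by
    rw [show X + Y - (R + S) = (X - R) + (Y - S) by abel]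
    exact norm_add_le _ _
  calc sInf (svSet (X + Y) (t + s)) ≤ ‖X + Y - (R + S)‖ :=
        csInf_le (svSet_bddBelow _ _) hmem
    _ ≤ ‖X - R‖ + ‖Y - S‖ := hnorm
    _ ≤ (sInf (svSet X t) + ε/2) + (sInf (svSet Y s) + ε/2) := by
        have h4 := le_of_lt haR; have h5 := le_of_lt hbS; linarith
    _ = sInf (svSet X t) + sInf (svSet Y s) + ε := by ring

noncomputable def gfun (p : ℝ) (T : H →L[ℂ] H) (t : ℝ) : ℝ := t ^ (1 / p) * sv T t

lemma gfun_nonneg {p : ℝ} (T : H →L[ℂ] H) {t : ℝ} (ht : 0 ≤ t) : 0 ≤ gfun p T t :=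
  mul_nonneg (Real.rpow_nonneg ht _) (sv_nonneg T t)

lemma gfun_neg (p : ℝ) (T : H →L[ℂ] H) (t : ℝ) : gfun p (-T) t = gfun p T t := by
  rw [gfun, gfun, sv_neg]

/-- The core quasi-triangle inequality in scaled form. -/
lemma gfun_ineq {p : ℝ} (hp : 0 < p) (X Y Z : H →L[ℂ] H) {δ t : ℝ} (hδ : 0 < δ) (ht : 0 < t) :
    gfun p (X + Y + Z) ((1 + 2*δ) * t) ≤
      (1 + 2*δ) ^ (1/p) * (gfun p X t + δ ^ (-(1/p)) * (gfun p Y (δ*t) + gfun p Z (δ*t))) := by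
  set q := 1/p with hq
  have hq0 : 0 < q := by positivity
  have hδt : 0 ≤ δ * t := by positivity
  have hsv : sv (X + Y + Z) ((1 + 2*δ) * t) ≤ sv X t + sv Y (δ*t) + sv Z (δ*t) := by
    have e : (1 + 2*δ) * t = (t + δ*t) + δ*t := by ring
    rw [e]
    calc sv (X + Y + Z) ((t + δ*t) + δ*t) ≤ sv (X + Y) (t + δ*t) + sv Z (δ*t) :=
          sv_add_le _ _ (by positivity) hδt
      _ ≤ sv X t + sv Y (δ*t) + sv Z (δ*t) := by
          have := sv_add_le X Y ht.le hδt
          linarith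
  have h1 : gfun p (X + Y + Z) ((1 + 2*δ) * t) ≤ (1 + 2*δ)^q * t^q *
      (sv X t + sv Y (δ*t) + sv Z (δ*t)) := by
    rw [gfun, ← Real.mul_rpow (by positivity) ht.le]
    apply mul_le_mul_of_nonneg_left hsv (Real.rpow_nonneg (by positivity) _)
  have hd1 : δ ^ (-q) * δ ^ q = 1 := by rw [← Real.rpow_add hδ]; simp
  have hmr : (δ * t) ^ q = δ ^ q * t ^ q := Real.mul_rpow hδ.le ht.le
  calc gfun p (X + Y + Z) ((1 + 2*δ) * t) ≤
        (1 + 2*δ)^q * t^q * (sv X t + sv Y (δ*t) + sv Z (δ*t)) := h1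
    _ = (1 + 2*δ) ^ q * (gfun p X t + δ ^ (-q) * (gfun p Y (δ*t) + gfun p Z (δ*t))) := by
        simp only [gfun, ← hq, hmr]
        linear_combination (-(1+2*δ)^q * (sv Y (δ*t) + sv Z (δ*t)) * t^q) * hd1

lemma zeroIdeal_tendsto {p : ℝ} {B : H →L[ℂ] H} (hB : B ∈ zeroIdeal p) :
    Tendsto (gfun p B) atTop (𝓝 0) := hB

lemma gfun_le_of_wnorm {p ε : ℝ} {C : H →L[ℂ] H} (hε : 0 < ε)
    (h : wnorm p C < ENNReal.ofReal ε) : ∀ t, 0 ≤ t → gfun p C t ≤ ε := by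
  intro t ht
  have h1 : ENNReal.ofReal ((t : ℝ) ^ (1 / p) * sv C t) ≤ wnorm p C :=
    le_iSup (fun s : {t : ℝ // 0 ≤ t} => ENNReal.ofReal ((s : ℝ) ^ (1 / p) * sv C s))
      (⟨t, ht⟩ : {t : ℝ // 0 ≤ t})
  exact le_of_lt ((ENNReal.ofReal_lt_ofReal_iff hε).mp (lt_of_le_of_lt h1 h))

lemma exists_decomp {p ε : ℝ} (A Al : H →L[ℂ] H) (hε : 0 < ε)
    (h : wdist p (Al - A) < ENNReal.ofReal ε) :
    ∃ Z W : H →L[ℂ] H, Z ∈ zeroIdeal p ∧ Al = A + Z + W ∧ ∀ t, 0 ≤ t → gfun p W t ≤ ε := by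
  rw [wdist] at h
  obtain ⟨B, hB⟩ := iInf_lt_iff.mp h
  obtain ⟨hBmem, h2⟩ := iInf_lt_iff.mp hB
  exact ⟨B, Al - A - B, hBmem, by abel, gfun_le_of_wnorm hε h2⟩

lemma gfun_sub_le {p : ℝ} (C C' : H →L[ℂ] H) {s : ℝ} (hs : 0 ≤ s) :
    gfun p (C - C') s ≤ 2 ^ (1/p) * (gfun p C (s/2) + gfun p C' (s/2)) := by
  have h1 : sv (C - C') s ≤ sv C (s/2) + sv C' (s/2) := by
    have h2 := sv_add_le C (-C') (by positivity : (0:ℝ) ≤ s/2) (by positivity : (0:ℝ) ≤ s/2)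
    rw [sv_neg] at h2
    calc sv (C - C') s = sv (C + -C') (s/2 + s/2) := by rw [sub_eq_add_neg, add_halves]
      _ ≤ sv C (s/2) + sv C' (s/2) := h2
  have hsq : s ^ (1/p) = 2 ^ (1/p) * (s/2) ^ (1/p) := by
    rw [← Real.mul_rpow (by norm_num) (by positivity)]
    congr 1
    ring
  calc gfun p (C - C') s ≤ s ^ (1/p) * (sv C (s/2) + sv C' (s/2)) :=
        mul_le_mul_of_nonneg_left h1 (Real.rpow_nonneg hs _)
    _ = 2 ^ (1/p) * (gfun p C (s/2) + gfun p C' (s/2)) := by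
        rw [hsq]; simp only [gfun]; ring

lemma gfun_sub_bound {p ε ε' : ℝ} {C C' : H →L[ℂ] H}
    (hC : ∀ t, 0 ≤ t → gfun p C t ≤ ε) (hC' : ∀ t, 0 ≤ t → gfun p C' t ≤ ε') :
    ∀ s, 0 ≤ s → gfun p (C - C') s ≤ 2 ^ (1/p) * (ε + ε') := by
  intro s hs
  have h2 : (0:ℝ) ≤ 2 ^ (1/p) := Real.rpow_nonneg (by norm_num) _
  have := gfun_sub_le (p := p) C C' hs
  have hc := hC (s/2) (by positivity)
  have hc' := hC' (s/2) (by positivity)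
  nlinarith

lemma zeroIdeal_sub {p : ℝ} {Z Z' : H →L[ℂ] H} (hZ : Z ∈ zeroIdeal p) (hZ' : Z' ∈ zeroIdeal p) :
    Z - Z' ∈ zeroIdeal p := by
  have hhalf : Tendsto (fun t : ℝ => t / 2) atTop atTop := tendsto_id.atTop_div_const (by norm_num)
  have h1 : Tendsto (fun t : ℝ => 2 ^ (1/p) * (gfun p Z (t/2) + gfun p Z' (t/2))) atTop
      (𝓝 (2 ^ (1/p) * (0 + 0))) :=
    (((zeroIdeal_tendsto hZ).comp hhalf).add ((zeroIdeal_tendsto hZ').comp hhalf)).const_mul _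
  rw [add_zero, mul_zero] at h1
  have : Tendsto (gfun p (Z - Z')) atTop (𝓝 0) := by
    apply tendsto_of_tendsto_of_tendsto_of_le_of_le' tendsto_const_nhds h1
    · filter_upwards [eventually_ge_atTop (0:ℝ)] with t ht using gfun_nonneg _ ht
    · filter_upwards [eventually_ge_atTop (0:ℝ)] with t ht using gfun_sub_le Z Z' ht
  exact this

lemma upper_ev {p : ℝ} (hp : 0 < p) {Y Z W : H →L[ℂ] H} {cY η δ ε' : ℝ}
    (hY : Tendsto (gfun p Y) atTop (𝓝 cY)) (hZ : Z ∈ zeroIdeal p)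
    (hW : ∀ t, 0 ≤ t → gfun p W t ≤ η) (hδ : 0 < δ) (hε' : 0 < ε') :
    ∀ᶠ s in atTop, gfun p (Y + Z + W) s ≤ (1+2*δ) ^ (1/p) * (cY + ε' + δ ^ (-(1/p)) * η) := by
  have h12 : (0:ℝ) < 1 + 2*δ := by linarith
  have hmul : Tendsto (fun t : ℝ => δ * t) atTop atTop :=
    Tendsto.const_mul_atTop hδ tendsto_id
  have hZ' : Tendsto (fun t : ℝ => gfun p Z (δ * t)) atTop (𝓝 0) :=
    (zeroIdeal_tendsto hZ).comp hmul
  have hcomb : Tendsto (fun t : ℝ => gfun p Y t + δ ^ (-(1/p)) * gfun p Z (δ * t)) atTop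
      (𝓝 (cY + δ ^ (-(1/p)) * 0)) := hY.add (hZ'.const_mul _)
  rw [mul_zero, add_zero] at hcomb
  obtain ⟨T, hT⟩ := eventually_atTop.mp
    ((hcomb.eventually_lt_const (by linarith : cY < cY + ε')).and (eventually_ge_atTop (1:ℝ)))
  rw [eventually_atTop]
  refine ⟨(1+2*δ) * max T 1, fun s hs => ?_⟩
  set t := s / (1+2*δ) with htdef
  have htT : max T 1 ≤ t := by
    rw [htdef, le_div_iff₀ h12]
    linarith [hs]
  have ht0 : 0 < t := lt_of_lt_of_le (by norm_num : (0:ℝ) < 1) ((le_max_right T 1).trans htT)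
  have hst : s = (1+2*δ) * t := by
    rw [htdef]; field_simp
  obtain ⟨hlt, -⟩ := hT t ((le_max_left T 1).trans htT)
  have hWb := hW (δ*t) (by positivity)
  have hδq : (0:ℝ) ≤ δ ^ (-(1/p)) := Real.rpow_nonneg hδ.le _
  have hZnn : 0 ≤ gfun p Z (δ*t) := gfun_nonneg _ (by positivity)
  rw [hst]
  calc gfun p (Y+Z+W) ((1+2*δ)*t)
      ≤ (1+2*δ) ^ (1/p) * (gfun p Y t + δ ^ (-(1/p)) * (gfun p Z (δ*t) + gfun p W (δ*t))) :=
        gfun_ineq hp Y Z W hδ ht0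
    _ ≤ (1+2*δ) ^ (1/p) * (cY + ε' + δ ^ (-(1/p)) * η) := by
        apply mul_le_mul_of_nonneg_left _ (Real.rpow_nonneg h12.le _)
        nlinarith [mul_le_mul_of_nonneg_left hWb hδq]

lemma lower_ev {p : ℝ} (hp : 0 < p) {Y Z W : H →L[ℂ] H} {cX η δ ε' : ℝ}
    (hX : Tendsto (gfun p (Y + Z + W)) atTop (𝓝 cX)) (hZ : Z ∈ zeroIdeal p)
    (hW : ∀ t, 0 ≤ t → gfun p W t ≤ η) (hδ : 0 < δ) (hε' : 0 < ε') :
    ∀ᶠ t in atTop, cX - ε' ≤ (1+2*δ) ^ (1/p) * (gfun p Y t + ε' + δ ^ (-(1/p)) * η) := by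
  have h12 : (0:ℝ) < 1 + 2*δ := by linarith
  have hXc : Tendsto (fun t : ℝ => gfun p (Y+Z+W) ((1+2*δ) * t)) atTop (𝓝 cX) :=
    hX.comp (Tendsto.const_mul_atTop h12 tendsto_id)
  have hmul : Tendsto (fun t : ℝ => δ * t) atTop atTop :=
    Tendsto.const_mul_atTop hδ tendsto_id
  have hZ' : Tendsto (fun t : ℝ => δ ^ (-(1/p)) * gfun p Z (δ * t)) atTop
      (𝓝 (δ ^ (-(1/p)) * 0)) := (((zeroIdeal_tendsto hZ).comp hmul).const_mul _)
  rw [mul_zero] at hZ'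
  filter_upwards [hXc.eventually_const_lt (by linarith : cX - ε' < cX),
    hZ'.eventually_lt_const hε', eventually_ge_atTop (1:ℝ)] with t h1 h2 ht1
  have ht0 : (0:ℝ) < t := by linarith
  have hineq := gfun_ineq hp Y Z W hδ ht0
  have hWb := hW (δ*t) (by positivity)
  have hδq : (0:ℝ) ≤ δ ^ (-(1/p)) := Real.rpow_nonneg hδ.le _
  have hK : (0:ℝ) ≤ (1+2*δ) ^ (1/p) := Real.rpow_nonneg h12.le _
  nlinarith [mul_le_mul_of_nonneg_left hWb hδq,
    mul_le_mul_of_nonneg_left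
      (show gfun p Y t + δ ^ (-(1/p)) * (gfun p Z (δ*t) + gfun p W (δ*t)) ≤
        gfun p Y t + ε' + δ ^ (-(1/p)) * η by
          nlinarith [mul_le_mul_of_nonneg_left hWb hδq]) hK]

lemma zeroIdeal_neg {p : ℝ} {Z : H →L[ℂ] H} (hZ : Z ∈ zeroIdeal p) : -Z ∈ zeroIdeal p := by
  have h : gfun p (-Z) = gfun p Z := funext (gfun_neg p Z)
  show Tendsto (gfun p (-Z)) atTop (𝓝 0)
  rw [h]
  exact hZ

lemma c_comp {p : ℝ} (hp : 0 < p) {X Y Z W : H →L[ℂ] H} {cX cY η δ : ℝ}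
    (hX : Tendsto (gfun p X) atTop (𝓝 cX)) (hY : Tendsto (gfun p Y) atTop (𝓝 cY))
    (hZ : Z ∈ zeroIdeal p) (hXeq : X = Y + Z + W)
    (hW : ∀ t, 0 ≤ t → gfun p W t ≤ η) (hδ : 0 < δ) :
    cX ≤ (1+2*δ) ^ (1/p) * (cY + δ ^ (-(1/p)) * η) := by
  have h12 : (0:ℝ) < 1 + 2*δ := by linarith
  have hK : (0:ℝ) < (1+2*δ) ^ (1/p) := Real.rpow_pos_of_pos h12 _
  apply _root_.le_of_forall_pos_le_add
  intro e he
  have hup := upper_ev hp hY hZ hW hδ (show 0 < e/(1+2*δ)^(1/p) by positivity)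
  rw [← hXeq] at hup
  have h1 := le_of_tendsto hX hup
  calc cX ≤ (1+2*δ)^(1/p) * (cY + e/(1+2*δ)^(1/p) + δ ^ (-(1/p)) * η) := h1
    _ = (1+2*δ)^(1/p) * (cY + δ ^ (-(1/p)) * η) + e := by field_simp; ring


/-- If `Aₗ ∈ 𝓛_{p,∞}` satisfy `t^{1/p} μ(t,Aₗ) → cₗ` and
`dist(Aₗ - A, (𝓛_{p,∞})₀) → 0`, then `lim_t t^{1/p} μ(t,A)` and `lim_l cₗ`
both exist and are equal. -/
theorem stmt4 (p : ℝ) (hp : 0 < p) (A : H →L[ℂ] H) (Aseq : ℕ → (H →L[ℂ] H)) (c : ℕ → ℝ)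
    (hcpt : ∀ l, IsCompactOperator (Aseq l))
    (hmem : ∀ l, wnorm p (Aseq l) ≠ ⊤)
    (hlim : ∀ l, Tendsto (fun t : ℝ => t ^ (1 / p) * sv (Aseq l) t) atTop (𝓝 (c l)))
    (hdist : Tendsto (fun l => wdist p (Aseq l - A)) atTop (𝓝 0)) :
    ∃ cinf : ℝ, Tendsto c atTop (𝓝 cinf) ∧
      Tendsto (fun t : ℝ => t ^ (1 / p) * sv A t) atTop (𝓝 cinf) := by
  have hlim' : ∀ l, Tendsto (gfun p (Aseq l)) atTop (𝓝 (c l)) := hlim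
  have hc0 : ∀ l, 0 ≤ c l := fun l => ge_of_tendsto (hlim' l)
    (by filter_upwards [eventually_ge_atTop (0:ℝ)] with t ht using gfun_nonneg _ ht)
  obtain ⟨N0, hN0⟩ := eventually_atTop.mp
    (hdist.eventually_lt_const (show (0:ℝ≥0∞) < ENNReal.ofReal 1 by
      simp [ENNReal.ofReal_pos]))
  set M : ℝ := (1+2*1) ^ (1/p) * (c N0 + 1 ^ (-(1/p)) * (2 ^ (1/p) * (1+1))) with hMdef
  have hM : ∀ m, N0 ≤ m → c m ≤ M := by
    intro m hm
    obtain ⟨Zm, Wm, hZm, hAm, hWm⟩ := exists_decomp A (Aseq m) one_pos (hN0 m hm)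
    obtain ⟨Z0, W0, hZ0, hA0, hW0⟩ := exists_decomp A (Aseq N0) one_pos (hN0 N0 le_rfl)
    have heq : Aseq m = Aseq N0 + (Zm - Z0) + (Wm - W0) := by rw [hAm, hA0]; abel
    exact c_comp hp (hlim' m) (hlim' N0) (zeroIdeal_sub hZm hZ0) heq
      (gfun_sub_bound hWm hW0) one_pos
  have hM0 : 0 ≤ M := by
    have h1 := hc0 N0
    rw [hMdef]
    positivity
  have star : ∀ ε : ℝ, 0 < ε → ∃ N, ∀ l, N ≤ l →
      ∀ᶠ t in atTop, |gfun p A t - c l| ≤ ε := by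
    intro ε hε
    set ε₀ := min 1 (ε/(8*(M+1+ε))) with hε₀def
    have hMpos : (0:ℝ) < M+1+ε := by linarith
    have hε₀pos : 0 < ε₀ := lt_min one_pos (by positivity)
    have hε₀1 : ε₀ ≤ 1 := min_le_left _ _
    have hε₀M : ε₀ * (M+1+ε) ≤ ε/8 := by
      calc ε₀*(M+1+ε) ≤ (ε/(8*(M+1+ε)))*(M+1+ε) :=
            mul_le_mul_of_nonneg_right (min_le_right _ _) hMpos.le
        _ = ε/8 := by field_simp
    set δ := ((1+ε₀)^p - 1)/2 with hδdef
    have h1ε₀ : (1:ℝ) < (1+ε₀)^p :=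
      (Real.one_lt_rpow_iff_of_pos (by linarith)).mpr (Or.inl ⟨by linarith, hp⟩)
    have hδpos : 0 < δ := by rw [hδdef]; linarith
    have h12δ : 1 + 2*δ = (1+ε₀)^p := by rw [hδdef]; ring
    have hK : (1+2*δ)^(1/p) = 1+ε₀ := by
      rw [h12δ, one_div, Real.rpow_rpow_inv (by linarith) hp.ne']
    set ε' := ε * δ^(1/p) / 16 with hε'def
    have hδq : (0:ℝ) < δ^(1/p) := Real.rpow_pos_of_pos hδpos _
    have hε'pos : 0 < ε' := by rw [hε'def]; positivity
    have hδcancel : δ^(-(1/p)) * δ^(1/p) = 1 := by rw [← Real.rpow_add hδpos]; simp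
    have hδε' : δ^(-(1/p)) * ε' = ε/16 := by
      rw [hε'def]
      linear_combination (ε/16) * hδcancel
    obtain ⟨N1, hN1⟩ := eventually_atTop.mp
      (hdist.eventually_lt_const (show (0:ℝ≥0∞) < ENNReal.ofReal ε' by
        simp [ENNReal.ofReal_pos, hε'pos]))
    refine ⟨max N0 N1, fun l hl => ?_⟩
    have hcM : c l ≤ M := hM l ((le_max_left _ _).trans hl)
    obtain ⟨Z, W, hZ, hAl, hW⟩ :=
      exists_decomp A (Aseq l) hε'pos (hN1 l ((le_max_right _ _).trans hl))
    have hAeq : A = Aseq l + (-Z) + (-W) := by rw [hAl]; abel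
    have hWn : ∀ t, 0 ≤ t → gfun p (-W) t ≤ ε' := fun t ht => by
      rw [gfun_neg]; exact hW t ht
    have hZn : -Z ∈ zeroIdeal p := zeroIdeal_neg hZ
    have hupper := upper_ev hp (hlim' l) hZn hWn hδpos (show (0:ℝ) < ε/8 by linarith)
    rw [← hAeq] at hupper
    have hXlim : Tendsto (gfun p (A + Z + W)) atTop (𝓝 (c l)) := by
      rw [← hAl]; exact hlim' l
    have hlower := lower_ev hp hXlim hZ hW hδpos (show (0:ℝ) < ε/8 by linarith)
    filter_upwards [hupper, hlower, eventually_ge_atTop (0:ℝ)] with t hu hlo ht0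
    rw [hK, hδε'] at hu hlo
    have hg0 : 0 ≤ gfun p A t := gfun_nonneg _ ht0
    have hprod1 : ε₀ * c l ≤ ε₀ * M := mul_le_mul_of_nonneg_left hcM hε₀pos.le
    have hprod2 : ε₀ * ε ≤ ε := mul_le_of_le_one_left hε.le hε₀1
    have hub : gfun p A t ≤ c l + ε/2 := by nlinarith
    have hgM : gfun p A t ≤ M + ε := by linarith
    have hprod3 : ε₀ * gfun p A t ≤ ε₀ * (M + ε) := mul_le_mul_of_nonneg_left hgM hε₀pos.le
    rw [abs_le]
    constructor
    · nlinarith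
    · linarith
  have hcauchy : CauchySeq c := by
    rw [Metric.cauchySeq_iff]
    intro ε hε
    obtain ⟨N, hN⟩ := star (ε/3) (by linarith)
    refine ⟨N, fun m hm n hn => ?_⟩
    obtain ⟨t, htm, htn⟩ := ((hN m hm).and (hN n hn)).exists
    rw [Real.dist_eq]
    rw [abs_le] at htm htn
    rw [abs_lt]
    constructor <;> [linarith; linarith]
  obtain ⟨cinf, hcinf⟩ := cauchySeq_tendsto_of_complete hcauchy
  refine ⟨cinf, hcinf, ?_⟩
  rw [Metric.tendsto_atTop]
  intro ε hε
  obtain ⟨N, hN⟩ := star (ε/3) (by linarith)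
  obtain ⟨N', hN'⟩ := Metric.tendsto_atTop.mp hcinf (ε/3) (by linarith)
  have h1 := hN (max N N') (le_max_left _ _)
  have h2 := hN' (max N N') (le_max_right _ _)
  rw [Real.dist_eq, abs_lt] at h2
  obtain ⟨T, hT⟩ := eventually_atTop.mp h1
  refine ⟨T, fun t ht => ?_⟩
  have h3 := hT t ht
  rw [abs_le] at h3
  show |gfun p A t - cinf| < ε
  rw [abs_lt]
  constructor <;> linarith
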